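/- Let λ(x,y) = 2x² + ax − 3y³ − 2cy² − by and let η be the differential operator η(g) = −x ∂g/∂x + y ∂g/∂y. For (x,y) with x ≠ 0 and y ≠ 0, the system λ = 0, ηλ = 0, η²λ = 0 holds if and only if x² = y²(c + 4y), a = −y²(4c + 15y)/x, and b = −2y(2c + 5y). -/
import Mathlib


/-- Partial derivative in the first variable. -/
noncomputable def px (g : ℝ × ℝ → ℝ) (p : ℝ × ℝ) : ℝ := deriv (fun s => g (s, p.2)) p.1

/-- Partial derivative in the second variable. -/
noncomputable def py (g : ℝ × ℝ → ℝ) (p : ℝ × ℝ) : ℝ := deriv (fun s => g (p.1, s)) p.2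

/-- The vector field `η = −x ∂/∂x + y ∂/∂y` applied to a function. -/
noncomputable def eta (g : ℝ × ℝ → ℝ) (p : ℝ × ℝ) : ℝ := -p.1 * px g p + p.2 * py g p

/-- The Jacobian determinant of the unfolding `G`. -/
noncomputable def lam (a b c : ℝ) (p : ℝ × ℝ) : ℝ :=
  2 * p.1 ^ 2 + a * p.1 - 3 * p.2 ^ 3 - 2 * c * p.2 ^ 2 - b * p.2

private lemma eta_lam_eq (a b c : ℝ) :
    eta (lam a b c) = fun p : ℝ × ℝ =>
      -4 * p.1 ^ 2 - a * p.1 - 9 * p.2 ^ 3 - 4 * c * p.2 ^ 2 - b * p.2 := by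
  funext p
  have hpx : px (lam a b c) p = 4 * p.1 + a := by
    have h : HasDerivAt (fun s : ℝ => lam a b c (s, p.2))
        (2 * (2 * p.1 ^ 1) + a * 1 - 0 - 0 - 0) p.1 := by
      simp only [lam]
      exact ((((((hasDerivAt_pow 2 p.1).const_mul 2).add
        ((hasDerivAt_id p.1).const_mul a)).sub (hasDerivAt_const _ _)).sub
        (hasDerivAt_const _ _)).sub (hasDerivAt_const _ _))
    rw [px, h.deriv]; ring
  have hpy : py (lam a b c) p = -9 * p.2 ^ 2 - 4 * c * p.2 - b := by
    have h : HasDerivAt (fun s : ℝ => lam a b c (p.1, s))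
        (0 - 3 * (3 * p.2 ^ 2) - 2 * c * (2 * p.2 ^ 1) - b * 1) p.2 := by
      simp only [lam]
      exact (((hasDerivAt_const _ _).sub ((hasDerivAt_pow 3 p.2).const_mul 3)).sub
        ((hasDerivAt_pow 2 p.2).const_mul (2 * c))).sub ((hasDerivAt_id p.2).const_mul b)
    rw [py, h.deriv]; ring
  rw [eta, hpx, hpy]; ring

private lemma eta_eta_lam_eq (a b c : ℝ) (p : ℝ × ℝ) :
    eta (eta (lam a b c)) p =
      8 * p.1 ^ 2 + a * p.1 - 27 * p.2 ^ 3 - 8 * c * p.2 ^ 2 - b * p.2 := by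
  rw [eta_lam_eq]
  have hpx : px (fun p : ℝ × ℝ =>
      -4 * p.1 ^ 2 - a * p.1 - 9 * p.2 ^ 3 - 4 * c * p.2 ^ 2 - b * p.2) p
      = -8 * p.1 - a := by
    have h : HasDerivAt (fun s : ℝ =>
        -4 * s ^ 2 - a * s - 9 * p.2 ^ 3 - 4 * c * p.2 ^ 2 - b * p.2)
        (-4 * (2 * p.1 ^ 1) - a * 1 - 0 - 0 - 0) p.1 :=
      ((((hasDerivAt_pow 2 p.1).const_mul (-4)).sub
        ((hasDerivAt_id p.1).const_mul a)).sub (hasDerivAt_const _ _)).sub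
        (hasDerivAt_const _ _) |>.sub (hasDerivAt_const _ _)
    rw [px, h.deriv]; ring
  have hpy : py (fun p : ℝ × ℝ =>
      -4 * p.1 ^ 2 - a * p.1 - 9 * p.2 ^ 3 - 4 * c * p.2 ^ 2 - b * p.2) p
      = -27 * p.2 ^ 2 - 8 * c * p.2 - b := by
    have h : HasDerivAt (fun s : ℝ =>
        -4 * p.1 ^ 2 - a * p.1 - 9 * s ^ 3 - 4 * c * s ^ 2 - b * s)
        (0 - 9 * (3 * p.2 ^ 2) - 4 * c * (2 * p.2 ^ 1) - b * 1) p.2 :=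
      (((hasDerivAt_const _ _).sub ((hasDerivAt_pow 3 p.2).const_mul 9)).sub
        ((hasDerivAt_pow 2 p.2).const_mul (4 * c))).sub ((hasDerivAt_id p.2).const_mul b)
    rw [py, h.deriv]; ring
  rw [eta, hpx, hpy]; ring

/-- For `x ≠ 0`, `y ≠ 0`, the system `λ = ηλ = η²λ = 0` holds iff
`x² = y²(c+4y)`, `a = −y²(4c+15y)/x` and `b = −2y(2c+5y)`. -/
theorem stmt6 (a b c x y : ℝ) (hx : x ≠ 0) (hy : y ≠ 0) :
    (lam a b c (x, y) = 0 ∧ eta (lam a b c) (x, y) = 0 ∧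
      eta (eta (lam a b c)) (x, y) = 0) ↔
    (x ^ 2 = y ^ 2 * (c + 4 * y) ∧
      a = -y ^ 2 * (4 * c + 15 * y) / x ∧
      b = -2 * y * (2 * c + 5 * y)) := by
  rw [eta_eta_lam_eq, eta_lam_eq]
  simp only [lam]
  constructor
  · rintro ⟨h1, h2, h3⟩
    have hX : x ^ 2 = y ^ 2 * (c + 4 * y) := by nlinarith [h1, h2, h3]
    have hB : b = -2 * y * (2 * c + 5 * y) := by
      have : b * y = (-2 * y * (2 * c + 5 * y)) * y := by nlinarith [h1, h2, h3]
      exact mul_right_cancel₀ hy this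
    have hA : a = -y ^ 2 * (4 * c + 15 * y) / x := by
      have : a * x = -y ^ 2 * (4 * c + 15 * y) := by nlinarith [h1, h2, h3]
      field_simp
      linarith [this]
    exact ⟨hX, hA, hB⟩
  · rintro ⟨hX, hA, hB⟩
    have hA' : a * x = -y ^ 2 * (4 * c + 15 * y) := by
      rw [hA]; field_simp
    refine ⟨?_, ?_, ?_⟩
    · linear_combination 2 * hX + hA' - y * hB
    · linear_combination -4 * hX - hA' - y * hB
    · linear_combination 8 * hX + hA' - y * hB
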